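/- arXiv:2403.14885 — 3 statements merged into one kernel-verified Lean document; each statement's English description precedes it below -/
import Mathlib

section
/- Let A ∈ 𝒜 be an additive PCM and let A′ be the orthogonal projection (with respect to the Frobenius inner product) of A onto the tie space 𝒜₁₂. Then for each k ∉ {1,2}, the k-th row sum of A′ equals the k-th row sum of A. -/
/-- The Frobenius inner product `⟨A,B⟩ = Σ_{k,l} a_{kl} b_{kl}`. -/
def finner {n : ℕ} (A B : Matrix (Fin n) (Fin n) ℝ) : ℝ :=
  ∑ k, ∑ l, A k l * B k l

/-- The tie space `𝒜₁₂` inside the `(n+2) × (n+2)` matrices: skew-symmetric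
matrices whose first two row sums coincide. -/
def tieSpace (n : ℕ) : Submodule ℝ (Matrix (Fin (n + 2)) (Fin (n + 2)) ℝ) where
  carrier := {A | (∀ i j, A i j + A j i = 0) ∧ ∑ k, A 0 k = ∑ k, A 1 k}
  add_mem' := by
    intro a b ha hb
    refine ⟨fun i j => ?_, ?_⟩
    · have h1 := ha.1 i j
      have h2 := hb.1 i j
      simp only [Matrix.add_apply]
      linarith
    · simp only [Matrix.add_apply, Finset.sum_add_distrib, ha.2, hb.2]
  zero_mem' := by
    refine ⟨fun i j => ?_, ?_⟩ <;> simp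
  smul_mem' := by
    intro c a ha
    refine ⟨fun i j => ?_, ?_⟩
    · have h := ha.1 i j
      simp only [Matrix.smul_apply, smul_eq_mul]
      linear_combination c * h
    · simp only [Matrix.smul_apply, smul_eq_mul, ← Finset.mul_sum, ha.2]

lemma finner_single {n : ℕ} (X : Matrix (Fin n) (Fin n) ℝ) (a b : Fin n) :
    (∑ k, ∑ l, X k l * (if k = a ∧ l = b then (1:ℝ) else 0)) = X a b := by
  simp [ite_and, mul_ite, Finset.sum_ite_eq]

/-- If `A′` is the orthogonal projection (w.r.t. the Frobenius inner product) of a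
skew-symmetric `A` onto the tie space `𝒜₁₂`, then for each row `k` other than the
first two, the `k`-th row sum of `A′` equals that of `A`. -/
theorem proj_rowSum_eq {n : ℕ} (A A' : Matrix (Fin (n + 2)) (Fin (n + 2)) ℝ)
    (hA : ∀ i j, A i j + A j i = 0)
    (hA' : A' ∈ tieSpace n)
    (horth : ∀ B ∈ tieSpace n, finner (A - A') B = 0) :
    ∀ k : Fin (n + 2), k ≠ 0 → k ≠ 1 → ∑ l, A' k l = ∑ l, A k l := by
  intro k hk0 hk1
  set D : Matrix (Fin (n + 2)) (Fin (n + 2)) ℝ := A - A' with hD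
  have hDskew : ∀ i j, D i j + D j i = 0 := by
    intro i j
    have h1 := hA i j
    have h2 := hA'.1 i j
    simp only [hD, Matrix.sub_apply]
    linarith
  -- Step 1: D k l = 0 for l ∉ {0,1}
  have hzero : ∀ l : Fin (n + 2), l ≠ 0 → l ≠ 1 → D k l = 0 := by
    intro l hl0 hl1
    by_cases hkl : k = l
    · have := hDskew k k
      subst hkl; linarith
    · set B : Matrix (Fin (n + 2)) (Fin (n + 2)) ℝ :=
        fun i j => (if i = k ∧ j = l then (1:ℝ) else 0) -
          (if i = l ∧ j = k then (1:ℝ) else 0) with hB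
      have hBmem : B ∈ tieSpace n := by
        refine ⟨fun i j => ?_, ?_⟩
        · simp only [hB]
          have e1 : (j = k ∧ i = l) = (i = l ∧ j = k) := propext and_comm
          have e2 : (j = l ∧ i = k) = (i = k ∧ j = l) := propext and_comm
          simp only [e1, e2]; ring
        · have e0k : ¬((0 : Fin (n+2)) = k) := fun h => hk0 h.symm
          have e0l : ¬((0 : Fin (n+2)) = l) := fun h => hl0 h.symm
          have e1k : ¬((1 : Fin (n+2)) = k) := fun h => hk1 h.symm
          have e1l : ¬((1 : Fin (n+2)) = l) := fun h => hl1 h.symm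
          simp [hB, e0k, e0l, e1k, e1l]
      have h := horth B hBmem
      rw [finner] at h
      simp only [hB, mul_sub, Finset.sum_sub_distrib, finner_single] at h
      have hs := hDskew k l
      have : D k l - D l k = 0 := by
        simpa [hD] using h
      linarith
  -- Step 2: D k 0 + D k 1 = 0
  have hpair : D k 0 + D k 1 = 0 := by
    set B : Matrix (Fin (n + 2)) (Fin (n + 2)) ℝ :=
      fun i j => ((if i = k ∧ j = 0 then (1:ℝ) else 0) +
        (if i = k ∧ j = 1 then (1:ℝ) else 0)) -
        ((if i = 0 ∧ j = k then (1:ℝ) else 0) +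
        (if i = 1 ∧ j = k then (1:ℝ) else 0)) with hB
    have h01 : ((0 : Fin (n+2)) ≠ 1) := by simp
    have hBmem : B ∈ tieSpace n := by
      refine ⟨fun i j => ?_, ?_⟩
      · simp only [hB]
        have e1 : (j = k ∧ i = 0) = (i = 0 ∧ j = k) := propext and_comm
        have e2 : (j = k ∧ i = 1) = (i = 1 ∧ j = k) := propext and_comm
        have e3 : (j = 0 ∧ i = k) = (i = k ∧ j = 0) := propext and_comm
        have e4 : (j = 1 ∧ i = k) = (i = k ∧ j = 1) := propext and_comm
        simp only [e1, e2, e3, e4]; ring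
      · have e0k : ¬((0 : Fin (n+2)) = k) := fun h => hk0 h.symm
        have e1k : ¬((1 : Fin (n+2)) = k) := fun h => hk1 h.symm
        simp [hB, e0k, e1k, h01, h01.symm]
    have h := horth B hBmem
    rw [finner] at h
    simp only [hB, mul_sub, mul_add, Finset.sum_sub_distrib, Finset.sum_add_distrib,
      finner_single] at h
    have h0 := hDskew k 0
    have h1 := hDskew k 1
    linarith
  -- Conclude
  have hsum : ∑ l, D k l = 0 := by
    have hsub : ({0, 1} : Finset (Fin (n + 2))) ⊆ Finset.univ := Finset.subset_univ _
    have := Finset.sum_subset hsub (fun x _ hx => by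
      simp only [Finset.mem_insert, Finset.mem_singleton, not_or] at hx
      exact hzero x hx.1 hx.2)
    rw [← this]
    have h01 : ((0 : Fin (n+2)) ≠ 1) := by simp
    rw [Finset.sum_pair h01]
    exact hpair
  have : ∑ l, (A k l - A' k l) = 0 := by
    simpa [hD] using hsum
  rw [Finset.sum_sub_distrib] at this
  linarith
end

section
/- Let A ∈ 𝒜 be an additive PCM and let A′ be the orthogonal projection of A onto the tie space 𝒜₁₂. Then the first and second row sums of A′ are both equal to the arithmetic mean of the first and second row sums of A: Σ_l a′_{1l} = Σ_l a′_{2l} = (Σ_l a_{1l} + Σ_l a_{2l})/2. -/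
/-- If `A′` is the orthogonal projection of a skew-symmetric `A` onto the tie
space `𝒜₁₂`, then the first and second row sums of `A′` are both equal to the
arithmetic mean of the first and second row sums of `A`. -/
theorem proj_first_two_rowSums {n : ℕ} (A A' : Matrix (Fin (n + 2)) (Fin (n + 2)) ℝ)
    (hA : ∀ i j, A i j + A j i = 0)
    (hA' : A' ∈ tieSpace n)
    (horth : ∀ B ∈ tieSpace n, finner (A - A') B = 0) :
    ∑ l, A' 0 l = ∑ l, A' 1 l ∧
    ∑ l, A' 0 l = (∑ l, A 0 l + ∑ l, A 1 l) / 2 := by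
  set D : Matrix (Fin (n + 2)) (Fin (n + 2)) ℝ := A - A' with hD
  have hDskew : ∀ i j, D i j + D j i = 0 := by
    intro i j
    have h1 := hA i j
    have h2 := hA'.1 i j
    simp only [hD, Matrix.sub_apply]
    linarith
  set f : Fin (n + 2) → ℝ := fun i => if i = 0 ∨ i = 1 then 1 else 0 with hf
  have sumf : ∀ (r : Fin (n + 2) → ℝ), ∑ k, f k * r k = r 0 + r 1 := by
    intro r
    have heq : ∀ k, f k * r k =
        (if k = 0 then r k else 0) + (if k = 1 then r k else 0) := by
      intro k
      by_cases h0 : k = 0 <;> by_cases h1 : k = 1 <;>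
        simp [hf, h0, h1]
    simp_rw [heq, Finset.sum_add_distrib, Finset.sum_ite_eq',
      Finset.mem_univ, if_true]
  set B : Matrix (Fin (n + 2)) (Fin (n + 2)) ℝ := fun i j => f i - f j with hB
  have hBmem : B ∈ tieSpace n := by
    refine ⟨fun i j => by simp [hB], ?_⟩
    have : f (0 : Fin (n + 2)) = f 1 := by simp [hf]
    simp [hB, this]
  have hkey := horth B hBmem
  have hrow : ∀ i, ∑ l, D i l = ∑ l, A i l - ∑ l, A' i l := by
    intro i
    simp [hD, Matrix.sub_apply, Finset.sum_sub_distrib]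
  -- compute finner D B
  have hexp : finner D B = 2 * ((∑ l, D 0 l) + (∑ l, D 1 l)) := by
    have e1 : finner D B = (∑ k, f k * ∑ l, D k l) - (∑ l, f l * ∑ k, D k l) := by
      unfold finner
      simp only [hB]
      have : ∀ k, ∑ l, D k l * (f k - f l)
          = f k * (∑ l, D k l) - ∑ l, D k l * f l := by
        intro k
        rw [Finset.mul_sum, ← Finset.sum_sub_distrib]
        exact Finset.sum_congr rfl fun l _ => by ring
      simp_rw [this, Finset.sum_sub_distrib]
      congr 1
      rw [Finset.sum_comm]
      exact Finset.sum_congr rfl fun l _ => by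
        rw [Finset.mul_sum]
        exact Finset.sum_congr rfl fun k _ => by ring
    have e2 : ∀ l, ∑ k, D k l = -∑ k, D l k := by
      intro l
      rw [← Finset.sum_neg_distrib]
      exact Finset.sum_congr rfl fun k _ => by have := hDskew l k; linarith
    rw [e1, sumf]
    have e3 : ∑ l, f l * ∑ k, D k l = -((∑ l, D 0 l) + (∑ l, D 1 l)) := by
      have : ∀ l, f l * ∑ k, D k l = f l * (-∑ k, D l k) := fun l => by rw [e2]
      simp_rw [this]
      rw [sumf]
      ring
    rw [e3]; ring
  have hsum : (∑ l, D 0 l) + (∑ l, D 1 l) = 0 := by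
    rw [hexp] at hkey; linarith
  have h0 := hrow 0
  have h1 := hrow 1
  refine ⟨hA'.2, ?_⟩
  have := hA'.2
  rw [h0, h1] at hsum
  linarith
end

section
/- Let A ∈ 𝒜 and let A′ be the orthogonal projection of A onto 𝒜₁₂. Then the total sum of all entries of A′ equals the total sum of all entries of A (both are zero, by skew-symmetry), and more specifically the row-sum (weight) vector of A′ differs from that of A only in coordinates 1 and 2. -/
/-- If `A′` is the orthogonal projection of a skew-symmetric `A` onto the tie
space `𝒜₁₂`, then the total sum of entries of `A′` equals that of `A` (both are
zero), and the row-sum (weight) vector of `A′` differs from that of `A` only in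
coordinates 1 and 2 (here `Fin` indices 0 and 1). -/
theorem proj_total_sum_and_weights {n : ℕ}
    (A A' : Matrix (Fin (n + 2)) (Fin (n + 2)) ℝ)
    (hA : ∀ i j, A i j + A j i = 0)
    (hA' : A' ∈ tieSpace n)
    (horth : ∀ B ∈ tieSpace n, finner (A - A') B = 0) :
    (∑ i, ∑ j, A' i j) = (∑ i, ∑ j, A i j) ∧
    (∑ i, ∑ j, A' i j) = 0 ∧
    (∀ k : Fin (n + 2), k ≠ 0 → k ≠ 1 → ∑ l, A' k l = ∑ l, A k l) := by
  obtain ⟨hskew', -⟩ := hA'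
  have hzero : ∀ (M : Matrix (Fin (n+2)) (Fin (n+2)) ℝ),
      (∀ i j, M i j + M j i = 0) → ∑ i, ∑ j, M i j = 0 := by
    intro M hM
    have h1 : (∑ i, ∑ j, M i j) + (∑ i, ∑ j, M i j) = 0 := by
      calc (∑ i, ∑ j, M i j) + (∑ i, ∑ j, M i j)
          = (∑ i, ∑ j, M i j) + (∑ j, ∑ i, M i j) := by rw [Finset.sum_comm]
        _ = ∑ i, ∑ j, (M i j + M j i) := by
            rw [← Finset.sum_add_distrib]
            congr 1; ext i
            rw [← Finset.sum_add_distrib]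
        _ = 0 := by simp [hM]
    linarith
  refine ⟨by rw [hzero A' hskew', hzero A hA], hzero A' hskew', ?_⟩
  intro k hk0 hk1
  set B : Matrix (Fin (n+2)) (Fin (n+2)) ℝ :=
    fun i j => (if i = k then (1:ℝ) else 0) - (if j = k then 1 else 0) with hB
  have hBmem : B ∈ tieSpace n := by
    constructor
    · intro i j; simp [hB]
    · have h0 : ((0 : Fin (n+2)) = k) = False := by simp [Ne.symm hk0]
      have h1 : ((1 : Fin (n+2)) = k) = False := by simp [Ne.symm hk1]
      simp [hB, h0, h1]
  have horthB := horth B hBmem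
  have hexp : finner (A - A') B = (∑ l, A k l - ∑ l, A' k l) + (∑ l, A k l - ∑ l, A' k l) := by
    unfold finner
    have hre : ∀ i j : Fin (n+2), (A - A') i j * B i j =
        (if i = k then (A i j - A' i j) else 0) - (if j = k then (A i j - A' i j) else 0) := by
      intro i j
      simp [hB, Matrix.sub_apply, mul_sub, mul_ite]
    calc ∑ i, ∑ j, (A - A') i j * B i j
        = ∑ i, ∑ j, ((if i = k then (A i j - A' i j) else 0)
            - (if j = k then (A i j - A' i j) else 0)) := by
          refine Finset.sum_congr rfl fun i _ => Finset.sum_congr rfl fun j _ => hre i j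
      _ = (∑ i, ∑ j, if i = k then (A i j - A' i j) else 0)
            - (∑ i, ∑ j, if j = k then (A i j - A' i j) else 0) := by
          simp [Finset.sum_sub_distrib]
      _ = (∑ j, (A k j - A' k j)) - (∑ i, (A i k - A' i k)) := by
          congr 1
          · rw [Finset.sum_comm]
            simp
          · simp
      _ = (∑ l, A k l - ∑ l, A' k l) + (∑ l, A k l - ∑ l, A' k l) := by
          have : ∀ i, A i k - A' i k = -(A k i - A' k i) := by
            intro i
            have := hA i k
            have := hskew' i k
            linarith
          rw [Finset.sum_congr rfl fun i _ => this i]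
          simp [Finset.sum_sub_distrib]
          ring
  rw [hexp] at horthB
  linarith
end
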